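/- Let R ≥ 1 and let I ⊂ ℝ be an interval of length one. Let ρ : I → (0,∞) be integrable and satisfy ρ(λx + (1-λ)y) ≤ R[λρ(x) + (1-λ)ρ(y)] for all x, y ∈ I and 0 < λ < 1. Then for any a, b ∈ I with a < b, ∫_a^b ρ(x) dx ≤ (R/2)(ρ(a) + ρ(b)). -/

import Mathlib

open Set MeasureTheory

theorem integral_le_of_relaxed_convex (R a : ℝ) (hR : 1 ≤ R) (ρ : ℝ → ℝ)
    (hpos : ∀ x ∈ Icc a (a + 1), 0 < ρ x)
    (hint : IntegrableOn ρ (Icc a (a + 1)))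
    (hconv : ∀ x ∈ Icc a (a + 1), ∀ y ∈ Icc a (a + 1), ∀ l : ℝ, 0 < l → l < 1 →
      ρ (l * x + (1 - l) * y) ≤ R * (l * ρ x + (1 - l) * ρ y)) :
    ∀ c ∈ Icc a (a + 1), ∀ d ∈ Icc a (a + 1), c < d →
      ∫ x in c..d, ρ x ≤ R / 2 * (ρ c + ρ d) := by
  intro c hc d hd hcd
  have hsub : Icc c d ⊆ Icc a (a + 1) := Icc_subset_Icc hc.1 hd.2
  have hdc : (0:ℝ) < d - c := by linarith
  have hρint : IntervalIntegrable ρ volume c d := by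
    rw [intervalIntegrable_iff_integrableOn_Icc_of_le hcd.le]
    exact hint.mono_set hsub
  set g : ℝ → ℝ := fun x => R / (d - c) * ((d - x) * ρ c + (x - c) * ρ d) with hg
  have hgcont : Continuous g := by fun_prop
  have hgint : IntervalIntegrable g volume c d := hgcont.intervalIntegrable c d
  have hρc := hpos c hc
  have hρd := hpos d hd
  have hle : ∀ x ∈ Icc c d, ρ x ≤ g x := by
    intro x hx
    have hne : d - c ≠ 0 := hdc.ne'
    rcases eq_or_lt_of_le hx.1 with h1 | h1
    · rw [← h1]
      have hgc : g c = R * ρ c := by simp only [hg]; field_simp; ring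
      rw [hgc]; nlinarith
    rcases eq_or_lt_of_le hx.2 with h2 | h2
    · rw [h2]
      have hgd : g d = R * ρ d := by simp only [hg]; field_simp; ring
      rw [hgd]; nlinarith
    · set l : ℝ := (d - x) / (d - c) with hl
      have hl0 : 0 < l := div_pos (by linarith) hdc
      have hl1 : l < 1 := by
        rw [hl, div_lt_one hdc]; linarith
      have hx' : l * c + (1 - l) * d = x := by
        rw [hl]; field_simp; ring
      have := hconv c hc d hd l hl0 hl1
      rw [hx'] at this
      refine this.trans (le_of_eq ?_)
      simp only [hg, hl]
      field_simp
      ring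
  have hmono := intervalIntegral.integral_mono_on hcd.le hρint hgint hle
  have hgval : ∫ x in c..d, g x = R * (d - c) / 2 * (ρ c + ρ d) := by
    have : ∀ x, g x = (R / (d - c) * (ρ d - ρ c)) * x +
        R / (d - c) * (d * ρ c - c * ρ d) := by
      intro x; simp only [hg]; ring
    simp only [this]
    rw [intervalIntegral.integral_add (intervalIntegral.intervalIntegrable_id.const_mul _)
      intervalIntegrable_const]
    rw [intervalIntegral.integral_const_mul, integral_id, intervalIntegral.integral_const]
    have hk : (d - c)⁻¹ * (d - c) = 1 := inv_mul_cancel₀ hdc.ne'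
    rw [smul_eq_mul]
    linear_combination (R * (ρ d - ρ c) * (d + c) / 2 + R * (d * ρ c - c * ρ d)) * hk
  rw [hgval] at hmono
  have hdc1 : d - c ≤ 1 := by
    rcases hc with ⟨hc1, hc2⟩; rcases hd with ⟨hd1, hd2⟩; linarith
  have : R * (d - c) / 2 * (ρ c + ρ d) ≤ R / 2 * (ρ c + ρ d) := by
    have hR0 : 0 < R := by linarith
    nlinarith [mul_nonneg (mul_nonneg hR0.le (by linarith : (0:ℝ) ≤ 1 - (d - c)))
      (by linarith : (0:ℝ) ≤ ρ c + ρ d)]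
  linarith
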